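/- arXiv:1101.0066 — 2 statements merged into one kernel-verified Lean document; each statement's English description precedes it below -/
import Mathlib

section
/- For every integer n ≥ 2, the quantity Σ_d C(p(d), 2) − T, where the sum is over all diagonals d of the convex (n+3)-gon G_{n+3}, p(d) is the number of diagonals crossing d, and T is the number of 3-element sets of pairwise crossing diagonals, equals 5·C(n+4, 6). -/
open Finset

/-- A diagonal of the convex `N`-gon with vertices labelled `1, …, N` in cyclic order:
a pair `(i, j)` with `1 ≤ i`, `i + 2 ≤ j ≤ N`, excluding the side `(1, N)`. -/
def IsDiag (N : ℕ) (d : ℕ × ℕ) : Prop :=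
  1 ≤ d.1 ∧ d.1 + 2 ≤ d.2 ∧ d.2 ≤ N ∧ ¬(d.1 = 1 ∧ d.2 = N)

instance (N : ℕ) (d : ℕ × ℕ) : Decidable (IsDiag N d) := by
  unfold IsDiag; infer_instance

/-- Two diagonals of a convex polygon cross (intersect at an interior point). -/
def Crosses (d e : ℕ × ℕ) : Prop :=
  (d.1 < e.1 ∧ e.1 < d.2 ∧ d.2 < e.2) ∨ (e.1 < d.1 ∧ d.1 < e.2 ∧ e.2 < d.2)

instance (d e : ℕ × ℕ) : Decidable (Crosses d e) := by
  unfold Crosses; infer_instance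

/-- The finite set of all diagonals of the convex `N`-gon. -/
def Diags (N : ℕ) : Finset (ℕ × ℕ) :=
  (Finset.range (N + 1) ×ˢ Finset.range (N + 1)).filter (IsDiag N)

/-- `crossNum N d` is the number of diagonals of the convex `N`-gon crossing `d`
(the number `p(d)` of distinguished points on `d`). -/
def crossNum (N : ℕ) (d : ℕ × ℕ) : ℕ :=
  ((Diags N).filter (fun e => Crosses d e)).card

lemma mem_Diags {N : ℕ} {d : ℕ × ℕ} :
    d ∈ Diags N ↔ (1 ≤ d.1 ∧ d.1 + 2 ≤ d.2 ∧ d.2 ≤ N ∧ ¬(d.1 = 1 ∧ d.2 = N)) := by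
  simp only [Diags, IsDiag, mem_filter, mem_product, mem_range]
  omega

lemma crossNum_eq {N : ℕ} {d : ℕ × ℕ} (hd : d ∈ Diags N) :
    crossNum N d = (d.2 - d.1 - 1) * (N - 1 - (d.2 - d.1)) := by
  obtain ⟨i, j⟩ := d
  rw [mem_Diags] at hd
  have h1 : (Diags N).filter (fun e => Crosses (i, j) e)
      = (Ioo i j ×ˢ Ioc j N) ∪ ((Icc 1 (i - 1)) ×ˢ Ioo i j) := by
    ext ⟨k, l⟩
    rw [Finset.mem_filter]
    simp only [Finset.mem_filter, mem_Diags, Crosses, mem_union, mem_product, mem_Ioo, mem_Ioc, mem_Icc]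
    omega
  have h2 : Disjoint (Ioo i j ×ˢ Ioc j N) ((Icc 1 (i - 1)) ×ˢ Ioo i j) := by
    rw [Finset.disjoint_left]
    rintro ⟨k, l⟩ hk hl
    simp only [mem_product, mem_Ioo, mem_Ioc, mem_Icc] at hk hl
    omega
  rw [crossNum, h1, card_union_of_disjoint h2, card_product, card_product,
      Nat.card_Ioo, Nat.card_Ioc, Nat.card_Icc]
  have e1 : N - 1 - (j - i) = (N - j) + (i - 1 + 1 - 1) := by omega
  rw [e1]
  generalize j - i - 1 = a
  generalize N - j = b
  generalize i - 1 + 1 - 1 = c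
  ring

lemma Diags_eq (N : ℕ) (hN : 5 ≤ N) :
    Diags N = (range (N - 3)).biUnion
      (fun t => (Icc 1 (N - 2 - t)).image (fun i => (i, i + t + 2))) := by
  ext ⟨i, j⟩
  simp only [mem_Diags, mem_biUnion, mem_range, mem_image, mem_Icc, Prod.mk.injEq]
  constructor
  · rintro h
    exact ⟨j - i - 2, by omega, i, by omega, rfl, by omega⟩
  · rintro ⟨t, ht, i', hi', rfl, rfl⟩
    omega

lemma sum_S (N : ℕ) (hN : 5 ≤ N) :
    (∑ d ∈ Diags N, (Nat.choose (crossNum N d) 2 : ℤ))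
      = ∑ t ∈ range (N - 3), ((N - 2 - t : ℕ) : ℤ) * (((t + 1) * (N - 3 - t)).choose 2 : ℤ) := by
  have h1 : ∀ d ∈ Diags N, (Nat.choose (crossNum N d) 2 : ℤ)
      = (fun a => (((a + 1) * (N - 3 - a)).choose 2 : ℤ)) (d.2 - d.1 - 2) := by
    intro d hd
    have hd' := mem_Diags.mp hd
    rw [crossNum_eq hd]
    have e1 : d.2 - d.1 - 1 = (d.2 - d.1 - 2) + 1 := by omega
    have e2 : N - 1 - (d.2 - d.1) = N - 3 - (d.2 - d.1 - 2) := by omega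
    rw [e1, e2]
  rw [Finset.sum_congr rfl h1, Diags_eq N hN, Finset.sum_biUnion]
  · apply Finset.sum_congr rfl
    intro t _
    rw [Finset.sum_image (by rintro a _ b _ h; simpa using (Prod.mk.injEq ..).mp h |>.1)]
    simp only [show ∀ (i t : ℕ), (i, i + t + 2).2 - (i, i + t + 2).1 - 2 = t from fun i t => by simp; omega]
    rw [Finset.sum_const, Nat.card_Icc]
    have : N - 2 - t + 1 - 1 = N - 2 - t := by omega
    rw [this, nsmul_eq_mul]
  · intro a _ b _ hab
    simp only [Function.onFun, Finset.disjoint_left, mem_image, mem_Icc]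
    rintro ⟨x, y⟩ ⟨i, hi, he⟩ ⟨i', hi', he'⟩
    rw [Prod.mk.injEq] at he he'
    omega

def Tup6 (N : ℕ) : Finset (ℕ × ℕ × ℕ × ℕ × ℕ × ℕ) :=
  (Icc 1 N ×ˢ Icc 1 N ×ˢ Icc 1 N ×ˢ Icc 1 N ×ˢ Icc 1 N ×ˢ Icc 1 N).filter
    (fun x => x.1 < x.2.1 ∧ x.2.1 < x.2.2.1 ∧ x.2.2.1 < x.2.2.2.1 ∧
      x.2.2.2.1 < x.2.2.2.2.1 ∧ x.2.2.2.2.1 < x.2.2.2.2.2)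

lemma mem_Tup6 {N a b c d e f : ℕ} :
    (a, b, c, d, e, f) ∈ Tup6 N ↔ 1 ≤ a ∧ a < b ∧ b < c ∧ c < d ∧ d < e ∧ e < f ∧ f ≤ N := by
  simp only [Tup6, mem_filter, mem_product, mem_Icc]
  omega

lemma card_six {a b c d e f : ℕ} (h1 : a < b) (h2 : b < c) (h3 : c < d)
    (h4 : d < e) (h5 : e < f) : ({a, b, c, d, e, f} : Finset ℕ).card = 6 := by
  rw [card_insert_of_notMem (by simp; omega), card_insert_of_notMem (by simp; omega),
      card_insert_of_notMem (by simp; omega), card_insert_of_notMem (by simp; omega),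
      card_insert_of_notMem (by simp; omega), card_singleton]

lemma sorted6_unique {a b c d e f a' b' c' d' e' f' : ℕ}
    (h : ({a, b, c, d, e, f} : Finset ℕ) = {a', b', c', d', e', f'})
    (h1 : a < b) (h2 : b < c) (h3 : c < d) (h4 : d < e) (h5 : e < f)
    (h1' : a' < b') (h2' : b' < c') (h3' : c' < d') (h4' : d' < e') (h5' : e' < f') :
    a = a' ∧ b = b' ∧ c = c' ∧ d = d' ∧ e = e' ∧ f = f' := by
  have H := Finset.ext_iff.mp h
  have Ha := (H a).mp (by simp)
  have Hb := (H b).mp (by simp)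
  have Hc := (H c).mp (by simp)
  have Hd := (H d).mp (by simp)
  have He := (H e).mp (by simp)
  have Hf := (H f).mp (by simp)
  have Ha' := (H a').mpr (by simp)
  have Hb' := (H b').mpr (by simp)
  have Hc' := (H c').mpr (by simp)
  have Hd' := (H d').mpr (by simp)
  have He' := (H e').mpr (by simp)
  have Hf' := (H f').mpr (by simp)
  simp only [Finset.mem_insert, Finset.mem_singleton] at Ha Hb Hc Hd He Hf Ha' Hb' Hc' Hd' He' Hf'
  have ea : a = a' := by clear Hb Hc Hd He Hf Hb' Hc' Hd' He' Hf'; omega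
  have ef : f = f' := by clear Hb Hc Hd He Ha Hb' Hc' Hd' He' Ha'; omega
  have eb : b = b' := by clear Hc Hd He Ha Hf Hc' Hd' He' Ha' Hf'; omega
  have ee : e = e' := by clear Hc Hd Hb Ha Hf Hc' Hd' Hb' Ha' Hf'; omega
  have ec : c = c' := by clear Hd Hb Ha Hf He Hd' Hb' Ha' Hf' He'; omega
  have ed : d = d' := by clear Hc Hb Ha Hf He Hc' Hb' Ha' Hf' He'; omega
  exact ⟨ea, eb, ec, ed, ee, ef⟩

lemma card_Tup6 (N : ℕ) : (Tup6 N).card = N.choose 6 := by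
  have : (Tup6 N).card = ((Icc 1 N).powersetCard 6).card := by
    apply Finset.card_bij (fun x _ => ({x.1, x.2.1, x.2.2.1, x.2.2.2.1, x.2.2.2.2.1,
      x.2.2.2.2.2} : Finset ℕ))
    · rintro ⟨a, b, c, d, e, f⟩ hx
      rw [mem_Tup6] at hx
      show ({a, b, c, d, e, f} : Finset ℕ) ∈ (Icc 1 N).powersetCard 6
      rw [mem_powersetCard]
      constructor
      · intro y hy
        simp only [Finset.mem_insert, Finset.mem_singleton] at hy
        rw [mem_Icc]
        rcases hy with rfl | rfl | rfl | rfl | rfl | rfl <;> omega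
      · exact card_six (by omega) (by omega) (by omega) (by omega) (by omega)
    · rintro ⟨a, b, c, d, e, f⟩ hx ⟨a', b', c', d', e', f'⟩ hx' hh
      rw [mem_Tup6] at hx hx'
      have hh' : ({a, b, c, d, e, f} : Finset ℕ) = {a', b', c', d', e', f'} := hh
      obtain ⟨e1, e2, e3, e4, e5, e6⟩ := sorted6_unique hh' (by omega) (by omega) (by omega)
        (by omega) (by omega) (by omega) (by omega) (by omega) (by omega) (by omega)
      simp only [Prod.mk.injEq]
      omega
    · intro s hs
      rw [mem_powersetCard] at hs
      obtain ⟨hsub, hcard⟩ := hs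
      have hlen : (s.sort (· ≤ ·)).length = 6 := by rw [Finset.length_sort]; exact hcard
      have hsort := (Finset.sortedLT_sort s).pairwise
      have htf : (s.sort (· ≤ ·)).toFinset = s := Finset.sort_toFinset s _
      obtain ⟨a, b, c, d, e, f, hl⟩ : ∃ a b c d e f,
          s.sort (· ≤ ·) = [a, b, c, d, e, f] := by
        rcases hls : s.sort (· ≤ ·) with _ | ⟨a, _ | ⟨b, _ | ⟨c, _ | ⟨d, _ | ⟨e, _ | ⟨f, _ | ⟨g, t⟩⟩⟩⟩⟩⟩⟩ <;>
          rw [hls] at hlen <;> simp at hlen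
        exact ⟨a, b, c, d, e, f, rfl⟩
      rw [hl] at hsort htf
      simp at hsort
      have hmem : ∀ y ∈ ([a, b, c, d, e, f] : List ℕ), y ∈ s := by
        intro y hy; rw [← htf]; simpa using hy
      refine ⟨(a, b, c, d, e, f), ?_, ?_⟩
      · rw [mem_Tup6]
        have ha := mem_Icc.mp (hsub (hmem a (by simp)))
        have hf := mem_Icc.mp (hsub (hmem f (by simp)))
        omega
      · rw [← htf]
        simp [Finset.ext_iff]
  rw [this, card_powersetCard, Nat.card_Icc]
  simp

lemma card_Triples (N : ℕ) :
    (((Diags N).powersetCard 3).filter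
      (fun s => ∀ d ∈ s, ∀ e ∈ s, d ≠ e → Crosses d e)).card = N.choose 6 := by
  rw [← card_Tup6 N]
  symm
  apply Finset.card_bij (fun x _ => ({(x.1, x.2.2.2.1), (x.2.1, x.2.2.2.2.1),
    (x.2.2.1, x.2.2.2.2.2)} : Finset (ℕ × ℕ)))
  · rintro ⟨a, b, c, d, e, f⟩ hx
    rw [mem_Tup6] at hx
    show ({(a, d), (b, e), (c, f)} : Finset (ℕ × ℕ)) ∈ _
    rw [mem_filter, mem_powersetCard]
    refine ⟨⟨?_, ?_⟩, ?_⟩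
    · intro y hy
      simp only [Finset.mem_insert, Finset.mem_singleton] at hy
      rw [mem_Diags]
      rcases hy with rfl | rfl | rfl <;> simp <;> omega
    · rw [card_insert_of_notMem (by simp [Prod.mk.injEq]; omega),
        card_insert_of_notMem (by simp [Prod.mk.injEq]; omega), card_singleton]
    · intro p hp q hq hpq
      simp only [Finset.mem_insert, Finset.mem_singleton] at hp hq
      unfold Crosses
      rcases hp with rfl | rfl | rfl <;> rcases hq with rfl | rfl | rfl <;>
        first
        | (exact absurd rfl hpq)
        | (simp only [Prod.mk.injEq] at hpq ⊢; omega)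
  · rintro ⟨a, b, c, d, e, f⟩ hx ⟨a', b', c', d', e', f'⟩ hx' hh
    rw [mem_Tup6] at hx hx'
    have hh' : ({(a, d), (b, e), (c, f)} : Finset (ℕ × ℕ))
        = {(a', d'), (b', e'), (c', f')} := hh
    have H := Finset.ext_iff.mp hh'
    have H1 := (H (a, d)).mp (by simp)
    have H2 := (H (b, e)).mp (by simp)
    have H3 := (H (c, f)).mp (by simp)
    have H4 := (H (a', d')).mpr (by simp)
    have H5 := (H (b', e')).mpr (by simp)
    have H6 := (H (c', f')).mpr (by simp)
    simp only [Finset.mem_insert, Finset.mem_singleton, Prod.mk.injEq] at H1 H2 H3 H4 H5 H6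
    simp only [Prod.mk.injEq]
    omega
  · intro t ht
    rw [mem_filter, mem_powersetCard] at ht
    obtain ⟨⟨hsub, hcard⟩, hcross⟩ := ht
    obtain ⟨d1, d2, d3, h12, h13, h23, rfl⟩ := Finset.card_eq_three.mp hcard
    have c12 := hcross d1 (by simp) d2 (by simp) h12
    have c13 := hcross d1 (by simp) d3 (by simp) h13
    have c23 := hcross d2 (by simp) d3 (by simp) h23
    have key : ∀ x y z : ℕ × ℕ, x ∈ Diags N → y ∈ Diags N → z ∈ Diags N →
        x.1 < y.1 → y.1 < z.1 → z.1 < x.2 → x.2 < y.2 → y.2 < z.2 →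
        ({x, y, z} : Finset (ℕ × ℕ)) = {d1, d2, d3} →
        ∃ w, ∃ (hw : w ∈ Tup6 N),
          ({(w.1, w.2.2.2.1), (w.2.1, w.2.2.2.2.1), (w.2.2.1, w.2.2.2.2.2)} : Finset (ℕ × ℕ))
            = {d1, d2, d3} := by
      intro x y z hxD hyD hzD o1 o2 o3 o4 o5 heq
      have hxD' := mem_Diags.mp hxD
      have hzD' := mem_Diags.mp hzD
      refine ⟨(x.1, y.1, z.1, x.2, y.2, z.2), ?_, ?_⟩
      · rw [mem_Tup6]; omega
      · show ({(x.1, x.2), (y.1, y.2), (z.1, z.2)} : Finset (ℕ × ℕ)) = _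
        simpa using heq
    unfold Crosses at c12 c13 c23
    rcases c12 with h12' | h12' <;> rcases c13 with h13' | h13' <;> rcases c23 with h23' | h23'
    · exact key d1 d2 d3 (hsub (by simp)) (hsub (by simp)) (hsub (by simp))
        (by omega) (by omega) (by omega) (by omega) (by omega) rfl
    · exact key d1 d3 d2 (hsub (by simp)) (hsub (by simp)) (hsub (by simp))
        (by omega) (by omega) (by omega) (by omega) (by omega)
        (by ext p; simp; tauto)
    · exact (by omega : False).elim
    · exact key d3 d1 d2 (hsub (by simp)) (hsub (by simp)) (hsub (by simp))
        (by omega) (by omega) (by omega) (by omega) (by omega)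
        (by ext p; simp; tauto)
    · exact key d2 d1 d3 (hsub (by simp)) (hsub (by simp)) (hsub (by simp))
        (by omega) (by omega) (by omega) (by omega) (by omega)
        (by ext p; simp; tauto)
    · exact (by omega : False).elim
    · exact key d2 d3 d1 (hsub (by simp)) (hsub (by simp)) (hsub (by simp))
        (by omega) (by omega) (by omega) (by omega) (by omega)
        (by ext p; simp; tauto)
    · exact key d3 d2 d1 (hsub (by simp)) (hsub (by simp)) (hsub (by simp))
        (by omega) (by omega) (by omega) (by omega) (by omega)
        (by ext p; simp; tauto)

lemma choose_two_cast (p : ℕ) : ((p.choose 2 : ℕ) : ℤ) * 2 = p * (p - 1) := by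
  induction p with
  | zero => simp
  | succ k ih =>
    rw [Nat.choose_succ_succ]
    push_cast
    rw [Nat.choose_one_right] at *
    push_cast at ih
    nlinarith [ih]

lemma choose_six_cast (k : ℕ) : (((k + 6).choose 6 : ℕ) : ℤ) * 720 =
    (k + 1) * (k + 2) * (k + 3) * (k + 4) * (k + 5) * (k + 6) := by
  have h : (k + 6).choose 6 * 720 * k.factorial = (k + 6).factorial := by
    have := Nat.choose_mul_factorial_mul_factorial (show 6 ≤ k + 6 by omega)
    simpa [Nat.factorial, show k + 6 - 6 = k by omega] using this
  have h2 : (k + 6).factorial = (k + 1) * (k + 2) * (k + 3) * (k + 4) * (k + 5) * (k + 6) * k.factorial := by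
    simp [show k + 6 = (k+5)+1 from rfl, show k + 5 = (k+4)+1 from rfl,
      show k + 4 = (k+3)+1 from rfl, show k + 3 = (k+2)+1 from rfl,
      show k + 2 = (k+1)+1 from rfl, Nat.factorial_succ]
    ring
  rw [h2] at h
  have h3 : (k + 6).choose 6 * 720 = (k + 1) * (k + 2) * (k + 3) * (k + 4) * (k + 5) * (k + 6) :=
    Nat.eq_of_mul_eq_mul_right k.factorial_pos h
  exact_mod_cast congrArg (Nat.cast : ℕ → ℤ) h3

lemma choose_five_cast (k : ℕ) : (((k + 5).choose 5 : ℕ) : ℤ) * 120 =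
    (k + 1) * (k + 2) * (k + 3) * (k + 4) * (k + 5) := by
  have h : (k + 5).choose 5 * 120 * k.factorial = (k + 5).factorial := by
    have := Nat.choose_mul_factorial_mul_factorial (show 5 ≤ k + 5 by omega)
    simpa [Nat.factorial, show k + 5 - 5 = k by omega] using this
  have h2 : (k + 5).factorial = (k + 1) * (k + 2) * (k + 3) * (k + 4) * (k + 5) * k.factorial := by
    simp [show k + 5 = (k+4)+1 from rfl, show k + 4 = (k+3)+1 from rfl,
      show k + 3 = (k+2)+1 from rfl, show k + 2 = (k+1)+1 from rfl, Nat.factorial_succ]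
    ring
  rw [h2] at h
  have h3 : (k + 5).choose 5 * 120 = (k + 1) * (k + 2) * (k + 3) * (k + 4) * (k + 5) :=
    Nat.eq_of_mul_eq_mul_right k.factorial_pos h
  exact_mod_cast congrArg (Nat.cast : ℕ → ℤ) h3

/-- closed form: `poly m M = 60 * Σ_{t<M} (m+3-t)·X·(X-1)` with `X = (t+1)(m+2-t)`. -/
noncomputable def poly (m M : ℤ) : ℤ :=
  50*M + 425*M^2 + 40*M^3 - 235*M^4 + 90*M^5 - 10*M^6
  + 134*m*M + 540*m*M^2 + 160*m*M^3 - 210*m*M^4 + 36*m*M^5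
  + 70*m^2*M + 225*m^2*M^2 + 110*m^2*M^3 - 45*m^2*M^4
  + 10*m^3*M + 30*m^3*M^2 + 20*m^3*M^3

lemma key_sum (m : ℕ) : ∀ M : ℕ,
    60 * (∑ t ∈ range M, (((m : ℤ) + 3 - t) * (((t : ℤ) + 1) * ((m : ℤ) + 2 - t))
      * (((t : ℤ) + 1) * ((m : ℤ) + 2 - t) - 1))) = poly (m : ℤ) (M : ℤ) := by
  intro M
  induction M with
  | zero => simp [poly]
  | succ K ih =>
    rw [Finset.sum_range_succ, mul_add, ih, poly]
    push_cast [poly]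
    ring

/-- For every `n ≥ 2`, the difference `S_{n+3} - T_{n+3}` between the number of
distinguished segments and the number of 3-element sets of pairwise crossing diagonals
of the convex `(n+3)`-gon equals `5·C(n+4, 6)` (this is `β^{-2,6}(Asⁿ) = b⁴(Z_{Asⁿ})`). -/
theorem segments_minus_triangles (n : ℕ) (hn : 2 ≤ n) :
    ((∑ d ∈ Diags (n + 3), Nat.choose (crossNum (n + 3) d) 2 : ℤ)
        - ((((Diags (n + 3)).powersetCard 3).filter
            (fun s => ∀ d ∈ s, ∀ e ∈ s, d ≠ e → Crosses d e)).card : ℤ))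
      = 5 * Nat.choose (n + 4) 6 := by
  obtain ⟨m, rfl⟩ : ∃ m, n = m + 2 := ⟨n - 2, by omega⟩
  rw [show m + 2 + 3 = m + 5 from by omega, show m + 2 + 4 = m + 6 from by omega,
    sum_S (m + 5) (by omega), card_Triples (m + 5),
    show m + 5 - 3 = m + 2 from by omega, show m + 5 - 2 = m + 3 from by omega]
  set S : ℤ := ∑ t ∈ range (m + 2),
    ((m + 3 - t : ℕ) : ℤ) * (((t + 1) * (m + 2 - t)).choose 2 : ℤ) with hS
  have hsum : ∑ t ∈ range (m + 2), (((m : ℤ) + 3 - t) * (((t : ℤ) + 1) * ((m : ℤ) + 2 - t))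
      * (((t : ℤ) + 1) * ((m : ℤ) + 2 - t) - 1)) = 2 * S := by
    rw [hS, Finset.mul_sum]
    apply Finset.sum_congr rfl
    intro t ht
    rw [Finset.mem_range] at ht
    have hc := choose_two_cast ((t + 1) * (m + 2 - t))
    have e1 : ((m + 3 - t : ℕ) : ℤ) = (m : ℤ) + 3 - t := by
      rw [Nat.cast_sub (by omega)]; push_cast; ring
    have e2 : (((t + 1) * (m + 2 - t) : ℕ) : ℤ) = ((t : ℤ) + 1) * ((m : ℤ) + 2 - t) := by
      rw [Nat.cast_mul, Nat.cast_sub (by omega)]; push_cast; ring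
    rw [e2] at hc
    rw [e1]
    linear_combination (-((m : ℤ) + 3 - t)) * hc
  have hA : 120 * S = poly (m : ℤ) ((m : ℤ) + 2) := by
    have := key_sum m (m + 2)
    rw [hsum] at this
    push_cast at this ⊢
    linarith
  have h6 := choose_six_cast m
  have h5 := choose_five_cast m
  have hB : ((Nat.choose (m + 5) 6 : ℕ) : ℤ) * 720
      = ((m : ℤ) + 1) * ((m : ℤ) + 2) * ((m : ℤ) + 3) * ((m : ℤ) + 4) * ((m : ℤ) + 5) * ((m : ℤ) + 6)
        - 6 * (((m : ℤ) + 1) * ((m : ℤ) + 2) * ((m : ℤ) + 3) * ((m : ℤ) + 4) * ((m : ℤ) + 5)) := by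
    have hcc : (m + 6).choose 6 = (m + 5).choose 5 + (m + 5).choose 6 :=
      Nat.choose_succ_succ (m + 5) 5
    have : ((Nat.choose (m + 6) 6 : ℕ) : ℤ) = ((Nat.choose (m + 5) 5 : ℕ) : ℤ)
        + ((Nat.choose (m + 5) 6 : ℕ) : ℤ) := by exact_mod_cast hcc
    linear_combination h6 - 6 * h5 - 720 * this
  rw [poly] at hA
  have final : 720 * (S - ((Nat.choose (m + 5) 6 : ℕ) : ℤ))
      = 720 * (5 * ((Nat.choose (m + 6) 6 : ℕ) : ℤ)) := by
    linear_combination 6 * hA - hB - 5 * h6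
  linarith [final]
end

section
/- Let n ≥ 3. The number of sets I of diagonals of the convex (n+3)-gon G_{n+3} with |I| = q(n)+1 such that the non-crossing graph G(I) is disconnected equals n+3 if n is even, and (n+3)/2 if n is odd; moreover each such G(I) has exactly two connected components. -/
/-- The non-crossing graph `G(I)` on a finite set `I` of diagonals: two distinct
diagonals are adjacent iff they do not cross. Its connected components correspond to
the connected components of the union `P_I` of the facets of the associahedron `Asⁿ`
indexed by `I`. -/
def ncGraph (I : Finset (ℕ × ℕ)) : SimpleGraph {x // x ∈ I} where
  Adj d e := d ≠ e ∧ ¬ Crosses d.1 e.1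
  symm := ⟨by
    rintro d e ⟨h1, h2⟩
    exact ⟨h1.symm, fun h => h2 (Or.symm h)⟩⟩
  loopless := ⟨fun d h => h.1 rfl⟩

/-- `G(I)` has exactly two connected components, `I₁` and `I₂`: they partition `I`,
are nonempty, and two diagonals of `I` are joined by a path in the non-crossing graph
iff they lie in the same part. -/
def TwoComponents (I I₁ I₂ : Finset (ℕ × ℕ)) : Prop :=
  I₁ ∪ I₂ = I ∧ Disjoint I₁ I₂ ∧ I₁.Nonempty ∧ I₂.Nonempty ∧
    ∀ (d : ℕ × ℕ) (hd : d ∈ I) (e : ℕ × ℕ) (he : e ∈ I),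
      (ncGraph I).Reachable ⟨d, hd⟩ ⟨e, he⟩ ↔
        (d ∈ I₁ ∧ e ∈ I₁) ∨ (d ∈ I₂ ∧ e ∈ I₂)

/-- `q(n) = n(n+2)/4` for even `n` and `q(n) = (n+1)²/4` for odd `n`. -/
def q (n : ℕ) : ℕ := if Even n then n * (n + 2) / 4 else (n + 1) ^ 2 / 4


-- AUX PART (to be inserted); assumes given defs above
lemma crosses_symm {d e : ℕ × ℕ} (h : Crosses d e) : Crosses e d := Or.symm h
lemma crosses_irrefl (d : ℕ × ℕ) : ¬ Crosses d d := by unfold Crosses; omega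
lemma not_crosses_share {d e : ℕ × ℕ}
    (h : d.1 = e.1 ∨ d.1 = e.2 ∨ d.2 = e.1 ∨ d.2 = e.2) : ¬ Crosses d e := by
  unfold Crosses; omega

lemma mem_Diags_s15 {N : ℕ} {d : ℕ × ℕ} : d ∈ Diags N ↔ IsDiag N d := by
  unfold Diags
  simp only [Finset.mem_filter, Finset.mem_product, Finset.mem_range]
  refine ⟨fun h => h.2, fun h => ⟨⟨?_, ?_⟩, h⟩⟩ <;>
    · obtain ⟨h1, h2, h3, h4⟩ := h; omega

def crossSet (N : ℕ) (d : ℕ × ℕ) : Finset (ℕ × ℕ) :=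
  (Diags N).filter (fun e => Crosses d e)

lemma mem_crossSet {N : ℕ} {d e : ℕ × ℕ} :
    e ∈ crossSet N d ↔ e ∈ Diags N ∧ Crosses d e := Finset.mem_filter

def maxD (N qv : ℕ) : Finset (ℕ × ℕ) :=
  (Diags N).filter (fun d => (d.2 - d.1 - 1) * (N + d.1 - d.2 - 1) = qv)

lemma q_even {k : ℕ} : q (2 * k) = k * (k + 1) := by
  unfold q
  rw [if_pos ⟨k, by ring⟩]
  have : 2 * k * (2 * k + 2) = k * (k+1) * 4 := by ring
  rw [this, Nat.mul_div_cancel _ (by norm_num)]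

lemma q_odd {k : ℕ} : q (2 * k + 1) = (k + 1) * (k + 1) := by
  unfold q
  rw [if_neg (by simp [Nat.even_add_one, parity_simps])]
  have : (2 * k + 1 + 1) ^ 2 = (k + 1) * (k + 1) * 4 := by ring
  rw [this, Nat.mul_div_cancel _ (by norm_num)]

lemma q_eq {n : ℕ} : q n = (n + 1) ^ 2 / 4 := by
  rcases Nat.even_or_odd n with ⟨k, hk⟩ | ⟨k, hk⟩
  · rw [show n = 2 * k by omega, q_even,
      show (2 * k + 1) ^ 2 = 4 * (k * (k + 1)) + 1 by ring]
    omega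
  · rw [show n = 2 * k + 1 by omega, q_odd,
      show (2 * k + 1 + 1) ^ 2 = 4 * ((k + 1) * (k + 1)) by ring]
    omega

lemma card_crossSet {N : ℕ} {d : ℕ × ℕ} (hd : d ∈ Diags N) :
    (crossSet N d).card = (d.2 - d.1 - 1) * (N + d.1 - d.2 - 1) := by
  obtain ⟨h1, h2, h3, h4⟩ := mem_Diags_s15.mp hd
  have key : crossSet N d =
      ((Finset.Ioo d.1 d.2) ×ˢ ((Finset.Ico 1 d.1) ∪ (Finset.Ioc d.2 N))).image
        (fun p => if p.2 < d.1 then (p.2, p.1) else (p.1, p.2)) := by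
    ext e
    simp only [mem_crossSet, Finset.mem_image, Finset.mem_product, Finset.mem_Ioo,
      Finset.mem_union, Finset.mem_Ico, Finset.mem_Ioc, mem_Diags_s15]
    constructor
    · rintro ⟨⟨e1, e2, e3, e4⟩, hc⟩
      rcases hc with ⟨c1, c2, c3⟩ | ⟨c1, c2, c3⟩
      · exact ⟨(e.1, e.2), ⟨⟨by omega, by omega⟩, by omega⟩, by
          simp only [if_neg (by omega : ¬ e.2 < d.1)]⟩
      · exact ⟨(e.2, e.1), ⟨⟨by omega, by omega⟩, by omega⟩, by
          simp only [if_pos (by omega : e.1 < d.1)]⟩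
    · rintro ⟨⟨x, y⟩, ⟨⟨hx1, hx2⟩, hy⟩, he⟩
      by_cases hyd : y < d.1
      · rw [if_pos hyd] at he
        subst he
        unfold IsDiag Crosses
        simp only
        constructor
        · refine ⟨by omega, by omega, by omega, ?_⟩
          rintro ⟨-, hN⟩; omega
        · omega
      · rw [if_neg hyd] at he
        subst he
        unfold IsDiag Crosses
        simp only
        constructor
        · refine ⟨by omega, by omega, by omega, ?_⟩
          rintro ⟨hx, -⟩; omega
        · omega
  rw [key, Finset.card_image_of_injOn, Finset.card_product,
    Finset.card_union_of_disjoint, Nat.card_Ioo, Nat.card_Ico, Nat.card_Ioc]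
  · congr 1
    omega
  · rw [Finset.disjoint_left]
    intro a ha hb
    simp only [Finset.mem_Ico] at ha
    simp only [Finset.mem_Ioc] at hb
    omega
  · rintro ⟨x, y⟩ hxy ⟨x', y'⟩ hxy' he
    simp only [Finset.mem_coe, Finset.mem_product, Finset.mem_Ioo, Finset.mem_union,
      Finset.mem_Ico, Finset.mem_Ioc] at hxy hxy'
    by_cases h : y < d.1 <;> by_cases h' : y' < d.1 <;>
      simp only [if_pos, if_neg, h, h', if_true, if_false] at he <;>
      · rw [Prod.ext_iff] at he ⊢
        simp only at he ⊢
        omega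

lemma max_prod_iff {n a b : ℕ} (hn : 3 ≤ n) (hab : a + b = n + 1) :
    a * b = q n ↔ (Even n ∧ (2 * a = n ∨ 2 * a = n + 2)) ∨ (¬ Even n ∧ 2 * a = n + 1) := by
  rcases Nat.even_or_odd n with ⟨k, hk⟩ | ⟨k, hk⟩
  · subst hk
    rw [show k + k = 2 * k by ring] at *
    rw [q_even]
    constructor
    · intro h
      refine Or.inl ⟨⟨k, by ring⟩, ?_⟩
      rcases (by omega : a + 1 ≤ k ∨ a = k ∨ a = k + 1 ∨ k + 2 ≤ a) with hc | hc | hc | hc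
      · exfalso
        obtain ⟨c, hc⟩ : ∃ c, a + c + 1 = k := ⟨k - a - 1, by omega⟩
        have hb : b = k + c + 2 := by omega
        subst hb
        rw [show k = a + c + 1 by omega] at h
        nlinarith
      · omega
      · omega
      · exfalso
        obtain ⟨c, hc⟩ : ∃ c, a = k + c + 2 := ⟨a - k - 2, by omega⟩
        have hb : b + c + 1 = k := by omega
        subst hc
        rw [show k = b + c + 1 by omega] at h
        nlinarith
    · rintro (⟨-, h | h⟩ | ⟨h, -⟩)
      · have : a = k := by omega
        subst this; nlinarith
      · have : a = k + 1 := by omega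
        subst this; nlinarith
      · exact absurd ⟨k, by ring⟩ h
  · subst hk
    rw [q_odd]
    constructor
    · intro h
      refine Or.inr ⟨by simp [Nat.even_add_one, parity_simps], ?_⟩
      rcases (by omega : a + 1 ≤ k + 1 ∨ a = k + 1 ∨ k + 2 ≤ a) with hc | hc | hc
      · exfalso
        obtain ⟨c, hc⟩ : ∃ c, a + c = k := ⟨k - a, by omega⟩
        have hb : b = k + c + 2 := by omega
        subst hb
        rw [show k = a + c by omega] at h
        nlinarith
      · omega
      · exfalso
        obtain ⟨c, hc⟩ : ∃ c, a = k + c + 2 := ⟨a - k - 2, by omega⟩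
        have hb : b + c = k := by omega
        subst hc
        rw [show k = b + c by omega] at h
        nlinarith
    · rintro (⟨h, -⟩ | ⟨-, h⟩)
      · exact absurd h (by simp [Nat.even_add_one, parity_simps])
      · have : a = k + 1 := by omega
        subst this; nlinarith

lemma filter_gap_card {N c : ℕ} (h2 : 2 ≤ c) (hc : c + 2 ≤ N) :
    ((Diags N).filter (fun d => d.2 - d.1 = c)).card = N - c := by
  have key : (Diags N).filter (fun d => d.2 - d.1 = c)
      = (Finset.Icc 1 (N - c)).image (fun i => (i, i + c)) := by
    ext e
    simp only [Finset.mem_filter, Finset.mem_image, Finset.mem_Icc, mem_Diags_s15]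
    constructor
    · rintro ⟨⟨h1, h2', h3, h4⟩, hg⟩
      exact ⟨e.1, ⟨h1, by omega⟩, by rw [Prod.ext_iff]; constructor <;> simp <;> omega⟩
    · rintro ⟨i, ⟨hi1, hi2⟩, rfl⟩
      refine ⟨⟨by simpa using hi1, by simp; omega, by simp; omega, ?_⟩, by simp⟩
      simp only
      omega
  rw [key, Finset.card_image_of_injective _ (fun i j h => by
    simpa using congrArg Prod.fst h), Nat.card_Icc]
  omega

lemma mem_maxD_iff {n : ℕ} (hn : 3 ≤ n) {d : ℕ × ℕ} :
    d ∈ maxD (n + 3) (q n) ↔ d ∈ Diags (n + 3) ∧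
      ((Even n ∧ (2 * (d.2 - d.1) = n + 2 ∨ 2 * (d.2 - d.1) = n + 4)) ∨
        (¬ Even n ∧ 2 * (d.2 - d.1) = n + 3)) := by
  unfold maxD
  rw [Finset.mem_filter]
  constructor
  · rintro ⟨hd, hq⟩
    obtain ⟨h1, h2, h3, h4⟩ := mem_Diags_s15.mp hd
    rw [max_prod_iff hn (by omega)] at hq
    rcases hq with ⟨he, h⟩ | ⟨he, h⟩
    · exact ⟨hd, Or.inl ⟨he, by omega⟩⟩
    · exact ⟨hd, Or.inr ⟨he, by omega⟩⟩
  · rintro ⟨hd, hq⟩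
    obtain ⟨h1, h2, h3, h4⟩ := mem_Diags_s15.mp hd
    rw [max_prod_iff hn (by omega)]
    rcases hq with ⟨he, h⟩ | ⟨he, h⟩
    · exact ⟨hd, Or.inl ⟨he, by omega⟩⟩
    · exact ⟨hd, Or.inr ⟨he, by omega⟩⟩

lemma card_maxD {n : ℕ} (hn : 3 ≤ n) :
    (maxD (n + 3) (q n)).card = if Even n then n + 3 else (n + 3) / 2 := by
  rcases Nat.even_or_odd n with ⟨k, hk⟩ | ⟨k, hk⟩
  · have hk' : n = 2 * k := by omega
    subst hk'
    rw [if_pos ⟨k, by ring⟩]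
    have key : maxD (2 * k + 3) (q (2 * k)) =
        ((Diags (2 * k + 3)).filter (fun d => d.2 - d.1 = k + 1)) ∪
        ((Diags (2 * k + 3)).filter (fun d => d.2 - d.1 = k + 2)) := by
      ext d
      rw [mem_maxD_iff hn, Finset.mem_union, Finset.mem_filter, Finset.mem_filter]
      constructor
      · rintro ⟨hd, h⟩
        have : 2 * (d.2 - d.1) = 2 * k + 2 ∨ 2 * (d.2 - d.1) = 2 * k + 4 := by
          rcases h with ⟨-, h⟩ | ⟨he, -⟩
          · exact h
          · exact absurd ⟨k, by ring⟩ he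
        obtain ⟨h1, h2, h3, h4⟩ := mem_Diags_s15.mp hd
        rcases this with h' | h'
        · exact Or.inl ⟨hd, by omega⟩
        · exact Or.inr ⟨hd, by omega⟩
      · rintro (⟨hd, h⟩ | ⟨hd, h⟩) <;> exact ⟨hd, Or.inl ⟨⟨k, by ring⟩, by omega⟩⟩
    rw [key, Finset.card_union_of_disjoint, filter_gap_card (by omega) (by omega),
      filter_gap_card (by omega) (by omega)]
    · omega
    · rw [Finset.disjoint_left]
      intro a ha hb
      simp only [Finset.mem_filter] at ha hb
      omega
  · have hk' : n = 2 * k + 1 := by omega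
    subst hk'
    rw [if_neg (by simp [Nat.even_add_one, parity_simps])]
    have key : maxD (2 * k + 1 + 3) (q (2 * k + 1)) =
        ((Diags (2 * k + 1 + 3)).filter (fun d => d.2 - d.1 = k + 2)) := by
      ext d
      rw [mem_maxD_iff hn, Finset.mem_filter]
      constructor
      · rintro ⟨hd, h⟩
        have : 2 * (d.2 - d.1) = 2 * k + 4 := by
          rcases h with ⟨he, -⟩ | ⟨-, h⟩
          · exact absurd he (by simp [Nat.even_add_one, parity_simps])
          · omega
        exact ⟨hd, by omega⟩
      · rintro ⟨hd, h⟩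
        exact ⟨hd, Or.inr ⟨by simp [Nat.even_add_one, parity_simps], by omega⟩⟩
    rw [key, filter_gap_card (by omega) (by omega)]
    omega

lemma arith_core (α β m : ℤ) (hα : 3 ≤ α) (hβ : 3 ≤ β) (hm : 5 ≤ m)
    (hs : α + β ≤ m + 2) : α^2 + β^2 ≤ m^2 := by
  nlinarith [mul_nonneg (by linarith : (0:ℤ) ≤ α - 3) (by linarith : (0:ℤ) ≤ β - 3),
    mul_nonneg (by linarith : (0:ℤ) ≤ m + 2 - α - β) (by linarith : (0:ℤ) ≤ α - 3),
    mul_nonneg (by linarith : (0:ℤ) ≤ m + 2 - α - β) (by linarith : (0:ℤ) ≤ β - 3),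
    mul_nonneg (by linarith : (0:ℤ) ≤ m + 2 - α - β) (by linarith : (0:ℤ) ≤ m + 2 - α - β)]

lemma arith_bound {s t s' t' m : ℕ} (hm : 4 ≤ m) (h1 : 2 ≤ s * t) (h2 : 2 ≤ s' * t')
    (hsum : s + t + s' + t' ≤ m + 2) : s * t + s' * t' ≤ m ^ 2 / 4 := by
  have hs1 : 1 ≤ s := Nat.pos_of_ne_zero (by rintro rfl; simp at h1)
  have ht1 : 1 ≤ t := Nat.pos_of_ne_zero (by rintro rfl; simp at h1)
  have hs1' : 1 ≤ s' := Nat.pos_of_ne_zero (by rintro rfl; simp at h2)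
  have ht1' : 1 ≤ t' := Nat.pos_of_ne_zero (by rintro rfl; simp at h2)
  have hst : 3 ≤ s + t := by
    by_contra h
    push_neg at h
    have hs : s = 1 := by omega
    have ht : t = 1 := by omega
    rw [hs, ht] at h1
    norm_num at h1
  have hst' : 3 ≤ s' + t' := by
    by_contra h
    push_neg at h
    have hs : s' = 1 := by omega
    have ht : t' = 1 := by omega
    rw [hs, ht] at h2
    norm_num at h2
  rcases eq_or_lt_of_le hm with h4 | h5
  · have hA : s + t = 3 := by omega
    have hB : s' + t' = 3 := by omega
    have e1 : s * t = 2 := by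
      rcases (by omega : s = 1 ∧ t = 2 ∨ s = 2 ∧ t = 1) with ⟨rfl, rfl⟩ | ⟨rfl, rfl⟩ <;> rfl
    have e2 : s' * t' = 2 := by
      rcases (by omega : s' = 1 ∧ t' = 2 ∨ s' = 2 ∧ t' = 1) with ⟨rfl, rfl⟩ | ⟨rfl, rfl⟩ <;> rfl
    rw [e1, e2, ← h4]
    norm_num
  · rw [Nat.le_div_iff_mul_le (by norm_num)]
    have key : ((s * t + s' * t' : ℕ) : ℤ) * 4 ≤ ((m : ℕ) : ℤ)^2 := by
      push_cast
      have k1 : 4 * ((s:ℤ) * t) ≤ ((s:ℤ) + t)^2 := by nlinarith [sq_nonneg ((s:ℤ) - t)]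
      have k2 : 4 * ((s':ℤ) * t') ≤ ((s':ℤ) + t')^2 := by nlinarith [sq_nonneg ((s':ℤ) - t')]
      have k3 := arith_core ((s:ℤ) + t) ((s':ℤ) + t') m (by exact_mod_cast hst)
        (by exact_mod_cast hst') (by exact_mod_cast h5) (by push_cast; linarith)
      linarith
    exact_mod_cast key

def verts (A : Finset (ℕ × ℕ)) : Finset ℕ := A.image Prod.fst ∪ A.image Prod.snd

lemma mem_verts {A : Finset (ℕ × ℕ)} {v : ℕ} :
    v ∈ verts A ↔ ∃ a ∈ A, a.1 = v ∨ a.2 = v := by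
  unfold verts
  simp only [Finset.mem_union, Finset.mem_image]
  constructor
  · rintro (⟨a, ha, h⟩ | ⟨a, ha, h⟩)
    · exact ⟨a, ha, Or.inl h⟩
    · exact ⟨a, ha, Or.inr h⟩
  · rintro ⟨a, ha, h | h⟩
    · exact Or.inl ⟨a, ha, h⟩
    · exact Or.inr ⟨a, ha, h⟩

lemma verts_subset_Icc {N : ℕ} {A : Finset (ℕ × ℕ)} (hA : A ⊆ Diags N) :
    verts A ⊆ Finset.Icc 1 N := by
  intro v hv
  obtain ⟨a, ha, h⟩ := mem_verts.mp hv
  obtain ⟨h1, h2, h3, h4⟩ := mem_Diags_s15.mp (hA ha)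
  rw [Finset.mem_Icc]
  omega

lemma verts_disjoint {A B : Finset (ℕ × ℕ)}
    (hAB : ∀ a ∈ A, ∀ b ∈ B, Crosses a b) : Disjoint (verts A) (verts B) := by
  rw [Finset.disjoint_left]
  intro v hvA hvB
  obtain ⟨a, ha, hva⟩ := mem_verts.mp hvA
  obtain ⟨b, hb, hvb⟩ := mem_verts.mp hvB
  exact not_crosses_share (by omega) (hAB a ha b hb)

lemma card_le_split {N : ℕ} {A : Finset (ℕ × ℕ)} (hA : A ⊆ Diags N) (b0 : ℕ × ℕ)
    (h : ∀ a ∈ A, Crosses a b0) :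
    A.card ≤ ((verts A).filter (fun v => b0.1 < v ∧ v < b0.2)).card *
             ((verts A).filter (fun v => ¬(b0.1 < v ∧ v < b0.2))).card := by
  rw [← Finset.card_product]
  apply Finset.card_le_card_of_injOn
    (fun a => if a.1 < b0.1 then (a.2, a.1) else (a.1, a.2))
  · intro a ha
    have hcr := h a ha
    obtain ⟨h1, h2, h3, h4⟩ := mem_Diags_s15.mp (hA ha)
    rw [Finset.mem_coe, Finset.mem_product]; beta_reduce
    rcases hcr with ⟨c1, c2, c3⟩ | ⟨c1, c2, c3⟩
    · rw [if_pos c1]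
      constructor
      · simp only [Finset.mem_filter]
        exact ⟨mem_verts.mpr ⟨a, ha, Or.inr rfl⟩, c2, c3⟩
      · simp only [Finset.mem_filter]
        exact ⟨mem_verts.mpr ⟨a, ha, Or.inl rfl⟩, by omega⟩
    · rw [if_neg (by omega)]
      constructor
      · simp only [Finset.mem_filter]
        exact ⟨mem_verts.mpr ⟨a, ha, Or.inl rfl⟩, c1, c2⟩
      · simp only [Finset.mem_filter]
        exact ⟨mem_verts.mpr ⟨a, ha, Or.inr rfl⟩, by omega⟩
  · intro a ha a' ha' heq
    simp only [Finset.mem_coe] at ha ha'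
    obtain ⟨h1, h2, h3, h4⟩ := mem_Diags_s15.mp (hA ha)
    obtain ⟨h1', h2', h3', h4'⟩ := mem_Diags_s15.mp (hA ha')
    by_cases c : a.1 < b0.1 <;> by_cases c' : a'.1 < b0.1 <;>
      simp only [if_pos, if_neg, c, c', if_true, if_false] at heq <;>
      · rw [Prod.ext_iff] at heq ⊢
        simp only at heq ⊢
        omega

lemma both_big_bound {N : ℕ} (hN : 6 ≤ N) {A B : Finset (ℕ × ℕ)}
    (hA : A ⊆ Diags N) (hB : B ⊆ Diags N)
    (hcr : ∀ a ∈ A, ∀ b ∈ B, Crosses a b)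
    (h2A : 2 ≤ A.card) (h2B : 2 ≤ B.card) :
    A.card + B.card ≤ (N - 2) ^ 2 / 4 := by
  obtain ⟨b0, hb0⟩ := Finset.card_pos.mp (by omega : 0 < B.card)
  obtain ⟨a0, ha0⟩ := Finset.card_pos.mp (by omega : 0 < A.card)
  set s := ((verts A).filter (fun v => b0.1 < v ∧ v < b0.2)).card with hs
  set t := ((verts A).filter (fun v => ¬(b0.1 < v ∧ v < b0.2))).card with ht
  set s' := ((verts B).filter (fun v => a0.1 < v ∧ v < a0.2)).card with hs'
  set t' := ((verts B).filter (fun v => ¬(a0.1 < v ∧ v < a0.2))).card with ht'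
  have hAle : A.card ≤ s * t := card_le_split hA b0 (fun a ha => hcr a ha b0 hb0)
  have hBle : B.card ≤ s' * t' :=
    card_le_split hB a0 (fun b hb => crosses_symm (hcr a0 ha0 b hb))
  have hstA : s + t = (verts A).card := Finset.card_filter_add_card_filter_not ..
  have hstB : s' + t' = (verts B).card := Finset.card_filter_add_card_filter_not ..
  have hsum : (verts A).card + (verts B).card ≤ N := by
    rw [← Finset.card_union_of_disjoint (verts_disjoint hcr)]
    calc (verts A ∪ verts B).card ≤ (Finset.Icc 1 N).card :=
          Finset.card_le_card (Finset.union_subset (verts_subset_Icc hA) (verts_subset_Icc hB))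
    _ = N := by rw [Nat.card_Icc]; omega
  have harith := arith_bound (m := N - 2) (by omega) (le_trans h2A hAle)
    (le_trans h2B hBle) (by omega)
  omega

lemma reachable_isolated {I : Finset (ℕ × ℕ)} {d : ℕ × ℕ} (hd : d ∈ I)
    (hiso : ∀ e ∈ I, e ≠ d → Crosses d e) (z : {x // x ∈ I})
    (h : (ncGraph I).Reachable ⟨d, hd⟩ z) : z = ⟨d, hd⟩ := by
  obtain ⟨w⟩ := h
  cases w with
  | nil => rfl
  | cons h p =>
      rename_i b
      exact absurd (hiso b.1 b.2 (fun hb => h.1 (Subtype.ext hb.symm))) h.2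

lemma reach_of_share {I : Finset (ℕ × ℕ)} {x y : ℕ × ℕ} (hx : x ∈ I) (hy : y ∈ I)
    (h : x.1 = y.1 ∨ x.1 = y.2 ∨ x.2 = y.1 ∨ x.2 = y.2) :
    (ncGraph I).Reachable ⟨x, hx⟩ ⟨y, hy⟩ := by
  by_cases hxy : x = y
  · subst hxy; rfl
  · exact SimpleGraph.Adj.reachable ⟨fun hc => hxy (congrArg Subtype.val hc),
      not_crosses_share h⟩

lemma cross_struct {N : ℕ} {d e : ℕ × ℕ} (he : e ∈ Diags N) (h : Crosses d e) :
    ∃ x y, d.1 < x ∧ x < d.2 ∧ (y < d.1 ∨ d.2 < y) ∧ (e = (x, y) ∨ e = (y, x)) := by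
  rcases h with ⟨c1, c2, c3⟩ | ⟨c1, c2, c3⟩
  · exact ⟨e.1, e.2, c1, c2, Or.inr c3, Or.inl rfl⟩
  · exact ⟨e.2, e.1, c2, c3, Or.inl c1, Or.inr rfl⟩

lemma crossSet_reach {N : ℕ} {d : ℕ × ℕ} (hd : d ∈ Diags N) {I : Finset (ℕ × ℕ)}
    (hI : crossSet N d ⊆ I) {e f : ℕ × ℕ} (he : e ∈ crossSet N d) (hf : f ∈ crossSet N d) :
    (ncGraph I).Reachable ⟨e, hI he⟩ ⟨f, hI hf⟩ := by
  obtain ⟨hd1, hd2, hd3, hd4⟩ := mem_Diags_s15.mp hd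
  obtain ⟨heD, hec⟩ := mem_crossSet.mp he
  obtain ⟨hfD, hfc⟩ := mem_crossSet.mp hf
  obtain ⟨he1, he2, he3, he4⟩ := mem_Diags_s15.mp heD
  obtain ⟨hf1, hf2, hf3, hf4⟩ := mem_Diags_s15.mp hfD
  obtain ⟨xe, ye, hxe1, hxe2, hye, hee⟩ := cross_struct heD hec
  obtain ⟨xf, yf, hxf1, hxf2, hyf, hff⟩ := cross_struct hfD hfc
  set g : ℕ × ℕ := if yf < d.1 then (yf, xe) else (xe, yf) with hg
  have hyf1 : 1 ≤ yf := by rcases hff with h | h <;> subst h <;> simp at hf1 hf2 hf3 ⊢ <;> omega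
  have hyfN : yf ≤ N := by rcases hff with h | h <;> subst h <;> simp at hf1 hf2 hf3 ⊢ <;> omega
  have hgD : g ∈ Diags N := by
    rw [mem_Diags_s15]
    by_cases hc : yf < d.1
    · rw [hg, if_pos hc]
      exact ⟨by simpa using hyf1, by simp; omega, by simp; omega, by simp; omega⟩
    · rw [hg, if_neg hc]
      refine ⟨by simp; omega, by simp; omega, by simpa using hyfN, by simp; omega⟩
  have hgc : Crosses d g := by
    by_cases hc : yf < d.1
    · rw [hg, if_pos hc]
      right
      simp only
      omega
    · rw [hg, if_neg hc]
      left
      simp only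
      omega
  have hgI : g ∈ I := hI (mem_crossSet.mpr ⟨hgD, hgc⟩)
  have r1 : (ncGraph I).Reachable ⟨e, hI he⟩ ⟨g, hgI⟩ := by
    apply reach_of_share
    have hgx : g.1 = xe ∨ g.2 = xe := by
      by_cases hc : yf < d.1
      · rw [hg, if_pos hc]; right; rfl
      · rw [hg, if_neg hc]; left; rfl
    rcases hee with h | h <;> subst h <;> simp only <;> omega
  have r2 : (ncGraph I).Reachable ⟨g, hgI⟩ ⟨f, hI hf⟩ := by
    apply reach_of_share
    have hgy : g.1 = yf ∨ g.2 = yf := by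
      by_cases hc : yf < d.1
      · rw [hg, if_pos hc]; left; rfl
      · rw [hg, if_neg hc]; right; rfl
    rcases hff with h | h <;> subst h <;> simp only <;> omega
  exact r1.trans r2

lemma q_ge {n : ℕ} (hn : 3 ≤ n) : 4 ≤ q n := by
  have h16 : 16 ≤ (n + 1) ^ 2 := by nlinarith
  calc 4 = 16 / 4 := by norm_num
  _ ≤ (n + 1) ^ 2 / 4 := Nat.div_le_div_right h16
  _ = q n := q_eq.symm

lemma crossNum_le {n : ℕ} (hn : 3 ≤ n) {d : ℕ × ℕ} (hd : d ∈ Diags (n + 3)) :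
    (d.2 - d.1 - 1) * (n + 3 + d.1 - d.2 - 1) ≤ q n := by
  obtain ⟨h1, h2, h3, h4⟩ := mem_Diags_s15.mp hd
  set a := d.2 - d.1 - 1 with ha
  set b := n + 3 + d.1 - d.2 - 1 with hb
  have hab : a + b = n + 1 := by omega
  rw [q_eq, Nat.le_div_iff_mul_le (by norm_num)]
  have key : ((a * b : ℕ) : ℤ) * 4 ≤ ((n + 1 : ℕ) : ℤ) ^ 2 := by
    have hab' : (a : ℤ) + b = (n : ℤ) + 1 := by exact_mod_cast hab
    push_cast
    nlinarith [sq_nonneg ((a : ℤ) - b)]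
  exact_mod_cast key

lemma singleton_side {n : ℕ} (hn : 3 ≤ n) {I A B : Finset (ℕ × ℕ)}
    (hI : I ⊆ Diags (n + 3)) (hcard : I.card = q n + 1)
    (hU : A ∪ B = I) (hD : Disjoint A B)
    (hcr : ∀ a ∈ A, ∀ b ∈ B, Crosses a b) {d : ℕ × ℕ} (hA : A = {d}) :
    d ∈ maxD (n + 3) (q n) ∧ I = insert d (crossSet (n + 3) d) := by
  subst hA
  have hdI : d ∈ I := hU ▸ Finset.mem_union_left _ (Finset.mem_singleton_self d)
  have hdD : d ∈ Diags (n + 3) := hI hdI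
  have hBsub : B ⊆ crossSet (n + 3) d := by
    intro b hb
    exact mem_crossSet.mpr ⟨hI (hU ▸ Finset.mem_union_right _ hb),
      hcr d (Finset.mem_singleton_self d) b hb⟩
  have hBcard : B.card = q n := by
    have hu := Finset.card_union_of_disjoint hD
    rw [hU, hcard, Finset.card_singleton] at hu
    omega
  have hcs := card_crossSet hdD
  have hle := crossNum_le hn hdD
  have hge := Finset.card_le_card hBsub
  have hBeq : B = crossSet (n + 3) d := Finset.eq_of_subset_of_card_le hBsub (by omega)
  constructor
  · exact Finset.mem_filter.mpr ⟨hdD, by omega⟩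
  · rw [← hU, hBeq, Finset.insert_eq]

lemma classify {n : ℕ} (hn : 3 ≤ n) {I : Finset (ℕ × ℕ)} (hI : I ⊆ Diags (n + 3))
    (hcard : I.card = q n + 1) (hnp : ¬ (ncGraph I).Preconnected) :
    ∃ d ∈ maxD (n + 3) (q n), I = insert d (crossSet (n + 3) d) := by
  classical
  rw [SimpleGraph.Preconnected] at hnp
  push_neg at hnp
  obtain ⟨u, v, huv⟩ := hnp
  set A := I.filter (fun z => ∃ hz : z ∈ I, (ncGraph I).Reachable u ⟨z, hz⟩) with hAdef
  set B := I \ A with hBdef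
  have hAsub : A ⊆ I := Finset.filter_subset _ _
  have hUAB : A ∪ B = I := Finset.union_sdiff_of_subset hAsub
  have hDAB : Disjoint A B := Finset.disjoint_sdiff
  have hcr : ∀ a ∈ A, ∀ b ∈ B, Crosses a b := by
    intro a ha b hb
    obtain ⟨haI, hza, hra⟩ := Finset.mem_filter.mp ha
    have hbI : b ∈ I := (Finset.mem_sdiff.mp hb).1
    have hbA : b ∉ A := (Finset.mem_sdiff.mp hb).2
    by_contra hnc
    have hab : a ≠ b := fun h => hbA (h ▸ ha)
    have hadj : (ncGraph I).Adj ⟨a, haI⟩ ⟨b, hbI⟩ :=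
      ⟨fun h => hab (congrArg Subtype.val h), hnc⟩
    exact hbA (Finset.mem_filter.mpr ⟨hbI, hbI, hra.trans hadj.reachable⟩)
  have huA : u.1 ∈ A := Finset.mem_filter.mpr ⟨u.2, u.2, by rw [Subtype.coe_eta]⟩
  have hvB : v.1 ∈ B := by
    rw [hBdef, Finset.mem_sdiff]
    refine ⟨v.2, fun hm => ?_⟩
    obtain ⟨-, hz, hr⟩ := Finset.mem_filter.mp hm
    rw [Subtype.coe_eta] at hr
    exact huv hr
  have hA1 : 1 ≤ A.card := Finset.card_pos.mpr ⟨u.1, huA⟩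
  have hB1 : 1 ≤ B.card := Finset.card_pos.mpr ⟨v.1, hvB⟩
  have hsum : A.card + B.card = q n + 1 := by
    rw [← Finset.card_union_of_disjoint hDAB, hUAB, hcard]
  by_cases h2 : 2 ≤ A.card ∧ 2 ≤ B.card
  · exfalso
    have hBsub : B ⊆ I := Finset.sdiff_subset
    have hb := both_big_bound (by omega : 6 ≤ n + 3) (hAsub.trans hI) (hBsub.trans hI)
      hcr h2.1 h2.2
    rw [show n + 3 - 2 = n + 1 by omega, ← q_eq] at hb
    omega
  · rw [not_and_or] at h2
    push_neg at h2
    rcases (by omega : A.card = 1 ∨ B.card = 1) with h1 | h1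
    · obtain ⟨d, hd⟩ := Finset.card_eq_one.mp h1
      obtain ⟨hm, hIeq⟩ := singleton_side hn hI hcard hUAB hDAB hcr hd
      exact ⟨d, hm, hIeq⟩
    · obtain ⟨d, hd⟩ := Finset.card_eq_one.mp h1
      have hUBA : B ∪ A = I := by rw [Finset.union_comm]; exact hUAB
      obtain ⟨hm, hIeq⟩ := singleton_side hn hI hcard hUBA hDAB.symm
        (fun b hb a ha => crosses_symm (hcr a ha b hb)) hd
      exact ⟨d, hm, hIeq⟩

lemma insert_cross_inj {n : ℕ} (hn : 3 ≤ n) {d d' : ℕ × ℕ}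
    (hd : d ∈ maxD (n + 3) (q n)) (hd' : d' ∈ maxD (n + 3) (q n))
    (heq : insert d (crossSet (n + 3) d) = insert d' (crossSet (n + 3) d')) : d = d' := by
  by_contra hne
  have hd'mem : d' ∈ insert d (crossSet (n + 3) d) := heq ▸ Finset.mem_insert_self d' _
  have hd'c : Crosses d d' := by
    rcases Finset.mem_insert.mp hd'mem with h | h
    · exact absurd h.symm hne
    · exact (mem_crossSet.mp h).2
  obtain ⟨hdD, -⟩ := Finset.mem_filter.mp hd
  obtain ⟨hd'D, -⟩ := Finset.mem_filter.mp hd'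
  obtain ⟨hD1, hD2, hD3, hD4⟩ := mem_Diags_s15.mp hdD
  obtain ⟨hE1, hE2, hE3, hE4⟩ := mem_Diags_s15.mp hd'D
  have hgap : d.1 + 3 ≤ d.2 := by
    rcases (mem_maxD_iff hn).mp hd with ⟨-, ⟨-, h | h⟩ | ⟨-, h⟩⟩ <;> omega
  obtain ⟨x, y, hx1, hx2, hy, hdd⟩ := cross_struct hd'D hd'c
  set x' : ℕ := if x = d.1 + 1 then d.1 + 2 else d.1 + 1 with hx'
  have hx'1 : d.1 < x' := by rw [hx']; split <;> omega
  have hx'2 : x' < d.2 := by rw [hx']; split <;> omega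
  have hx'x : x' ≠ x := by rw [hx']; split <;> omega
  have hdco : (d'.1 = x ∧ d'.2 = y) ∨ (d'.1 = y ∧ d'.2 = x) := by
    rcases hdd with h | h <;> rw [h] <;> simp
  have hy1 : 1 ≤ y := by omega
  have hyN : y ≤ n + 3 := by omega
  set e : ℕ × ℕ := if y < d.1 then (y, x') else (x', y) with he
  have heco : (e.1 = y ∧ e.2 = x') ∨ (e.1 = x' ∧ e.2 = y) := by
    rw [he]; split <;> simp
  have heD : e ∈ Diags (n + 3) := by
    rw [mem_Diags_s15]
    by_cases hc : y < d.1
    · rw [he, if_pos hc]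
      exact ⟨by simpa using hy1, by simp; omega, by simp; omega, by simp; omega⟩
    · rw [he, if_neg hc]
      refine ⟨by simp; omega, by simp; omega, by simpa using hyN, by simp; omega⟩
  have hec : Crosses d e := by
    by_cases hc : y < d.1
    · rw [he, if_pos hc]; right; simp only; omega
    · rw [he, if_neg hc]; left; simp only; omega
  have heI : e ∈ insert d' (crossSet (n + 3) d') :=
    heq ▸ Finset.mem_insert_of_mem (mem_crossSet.mpr ⟨heD, hec⟩)
  rcases Finset.mem_insert.mp heI with h | h
  · -- e = d' is impossible: they differ at x' vs x
    have c1 : e.1 = d'.1 := by rw [h]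
    have c2 : e.2 = d'.2 := by rw [h]
    omega
  · exact not_crosses_share (by omega : d'.1 = e.1 ∨ d'.1 = e.2 ∨ d'.2 = e.1 ∨ d'.2 = e.2)
      ((mem_crossSet.mp h).2)

open scoped Classical in
/-- Theorem 2.15 (combinatorial content): the number of sets `I` of diagonals of the
`(n+3)`-gon with `|I| = q(n)+1` whose non-crossing graph is disconnected equals `n+3`
for even `n` and `(n+3)/2` for odd `n`; moreover each such graph has exactly two
connected components. (By Hochster's formula this count is `β^{-q,2(q+1)}(Asⁿ)`.) -/
theorem count_disconnected_extremal_sets (n : ℕ) (hn : 3 ≤ n) :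
    (((Diags (n + 3)).powersetCard (q n + 1)).filter
        (fun I => ¬ (ncGraph I).Preconnected)).card
      = (if Even n then n + 3 else (n + 3) / 2) ∧
    ∀ I ∈ ((Diags (n + 3)).powersetCard (q n + 1)).filter
        (fun I => ¬ (ncGraph I).Preconnected),
      ∃ I₁ I₂ : Finset (ℕ × ℕ), TwoComponents I I₁ I₂ := by
  have hq4 := q_ge hn
  -- basic facts about F d = insert d (crossSet (n+3) d) for d maximal
  have hFmem : ∀ d ∈ maxD (n + 3) (q n),
      (insert d (crossSet (n + 3) d)) ⊆ Diags (n + 3) ∧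
      (insert d (crossSet (n + 3) d)).card = q n + 1 := by
    intro d hd
    obtain ⟨hdD, hprod⟩ := Finset.mem_filter.mp hd
    have hnm : d ∉ crossSet (n + 3) d := fun hm => crosses_irrefl d (mem_crossSet.mp hm).2
    refine ⟨Finset.insert_subset hdD (Finset.filter_subset _ _), ?_⟩
    rw [Finset.card_insert_of_notMem hnm, card_crossSet hdD, hprod]
  have hiso : ∀ d, ∀ z ∈ insert d (crossSet (n + 3) d), z ≠ d → Crosses d z := by
    intro d z hz hne
    rcases Finset.mem_insert.mp hz with h | h
    · exact absurd h hne
    · exact (mem_crossSet.mp h).2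
  have hcsne : ∀ d ∈ maxD (n + 3) (q n), (crossSet (n + 3) d).Nonempty := by
    intro d hd
    obtain ⟨hdD, hprod⟩ := Finset.mem_filter.mp hd
    rw [← Finset.card_pos, card_crossSet hdD, hprod]
    omega
  have hnpre : ∀ d ∈ maxD (n + 3) (q n),
      ¬ (ncGraph (insert d (crossSet (n + 3) d))).Preconnected := by
    intro d hd hp
    obtain ⟨e, hecs⟩ := hcsne d hd
    have hdI : d ∈ insert d (crossSet (n + 3) d) := Finset.mem_insert_self d _
    have heI : e ∈ insert d (crossSet (n + 3) d) := Finset.mem_insert_of_mem hecs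
    have hr := hp ⟨d, hdI⟩ ⟨e, heI⟩
    have := reachable_isolated hdI (hiso d) ⟨e, heI⟩ hr
    have hed : e = d := congrArg Subtype.val this
    exact crosses_irrefl d (hed ▸ (mem_crossSet.mp hecs).2)
  have hset : ((Diags (n + 3)).powersetCard (q n + 1)).filter
        (fun I => ¬ (ncGraph I).Preconnected)
      = (maxD (n + 3) (q n)).image (fun d => insert d (crossSet (n + 3) d)) := by
    ext I
    simp only [Finset.mem_filter, Finset.mem_powersetCard, Finset.mem_image]
    constructor
    · rintro ⟨⟨hIsub, hIcard⟩, hnp⟩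
      obtain ⟨d, hd, hIeq⟩ := classify hn hIsub hIcard hnp
      exact ⟨d, hd, hIeq.symm⟩
    · rintro ⟨d, hd, rfl⟩
      exact ⟨⟨(hFmem d hd).1, (hFmem d hd).2⟩, hnpre d hd⟩
  constructor
  · rw [hset, Finset.card_image_of_injOn (fun d hd d' hd' h => insert_cross_inj hn hd hd' h),
      card_maxD hn]
  · intro I hI
    rw [hset, Finset.mem_image] at hI
    obtain ⟨d, hd, hIeq⟩ := hI
    subst hIeq
    obtain ⟨hdD, hprod⟩ := Finset.mem_filter.mp hd
    have hnm : d ∉ crossSet (n + 3) d := fun hm => crosses_irrefl d (mem_crossSet.mp hm).2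
    refine ⟨{d}, crossSet (n + 3) d, ?_, ?_, Finset.singleton_nonempty d, hcsne d hd, ?_⟩
    · rw [← Finset.insert_eq]
    · simpa using hnm
    · intro x hx y hy
      constructor
      · intro hr
        rcases Finset.mem_insert.mp hx with hxd | hxc
        · subst hxd
          have := reachable_isolated hx (hiso x) ⟨y, hy⟩ hr
          have hyd : y = x := congrArg Subtype.val this
          subst hyd
          exact Or.inl ⟨Finset.mem_singleton_self y, Finset.mem_singleton_self y⟩
        · rcases Finset.mem_insert.mp hy with hyd | hyc
          · subst hyd
            have := reachable_isolated hy (hiso y) ⟨x, hx⟩ hr.symm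
            have hxd : x = y := congrArg Subtype.val this
            subst hxd
            exact Or.inl ⟨Finset.mem_singleton_self x, Finset.mem_singleton_self x⟩
          · exact Or.inr ⟨hxc, hyc⟩
      · rintro (⟨hx1, hy1⟩ | ⟨hx2, hy2⟩)
        · have hxd := Finset.mem_singleton.mp hx1
          have hyd := Finset.mem_singleton.mp hy1
          subst hxd
          have : y = x := hyd
          subst this
          rfl
        · exact crossSet_reach hdD (fun z hz => Finset.mem_insert_of_mem hz) hx2 hy2
end
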